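/- Let p be a prime, n coprime to p, and let S be a totally isotropic simultaneously cyclic subspace of F_p^n × F_p^n whose image in F_{p^2}^n under (a,b) ↦ a + η b (for η generating F_{p^2} over F_p) is an ideal of F_{p^2}[X]/(X^n - 1). If n divides p^t + 1 for some positive integer t, then S is uniquely cyclic: for every (0, h) in S, h = 0. -/

import Mathlib

open Polynomial

/-- The polynomial associated to a vector in `F_p^n`. -/
noncomputable def vecToPoly {p n : ℕ} (a : Fin n → ZMod p) : Polynomial (ZMod p) :=
  ∑ i : Fin n, Polynomial.C (a i) * Polynomial.X ^ (i : ℕ)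

/-- The cyclic right-shift operator on `F_p^n`. -/
def rightShift {p n : ℕ} [NeZero n] (u : Fin n → ZMod p) : Fin n → ZMod p :=
  fun i => u (i - 1)

/-- The symplectic form `⟨(a,b),(c,d)⟩ = aᵀd - bᵀc` on `F_p^n × F_p^n`. -/
def sympForm {p n : ℕ} (u v : (Fin n → ZMod p) × (Fin n → ZMod p)) : ZMod p :=
  (∑ i : Fin n, u.1 i * v.2 i) - (∑ i : Fin n, u.2 i * v.1 i)

/-- The identification of `F_p^n × F_p^n` with `F_{p²}[X]/(Xⁿ-1)` via `(a,b) ↦ a + ηb`. -/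
noncomputable def pairToQuot (p n : ℕ) [Fact p.Prime] (η : GaloisField p 2)
    (w : (Fin n → ZMod p) × (Fin n → ZMod p)) :
    Polynomial (GaloisField p 2) ⧸
      Ideal.span {(X : Polynomial (GaloisField p 2)) ^ n - 1} :=
  Ideal.Quotient.mk _
    ((vecToPoly w.1).map (algebraMap (ZMod p) (GaloisField p 2)) +
      Polynomial.C η * (vecToPoly w.2).map (algebraMap (ZMod p) (GaloisField p 2)))

section Aux

variable {p n : ℕ} [Fact p.Prime]

lemma vecToPoly_coeff (a : Fin n → ZMod p) (j : Fin n) :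
    (vecToPoly a).coeff (j : ℕ) = a j := by
  classical
  rw [vecToPoly, Polynomial.finset_sum_coeff, Finset.sum_eq_single j]
  · simp
  · intro i _ hij
    simp only [Polynomial.coeff_C_mul, Polynomial.coeff_X_pow]
    rw [if_neg (by simpa [Fin.val_eq_val] using Ne.symm hij), mul_zero]
  · simp

lemma vecToPoly_natDegree_lt [NeZero n] (a : Fin n → ZMod p) :
    (vecToPoly a).natDegree < n := by
  have hn : 0 < n := Nat.pos_of_ne_zero (NeZero.ne n)
  have h1 : (vecToPoly a).natDegree ≤ n - 1 := by
    apply Polynomial.natDegree_sum_le_of_forall_le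
    intro i _
    refine le_trans (Polynomial.natDegree_C_mul_le _ _) ?_
    simpa using Nat.le_sub_one_of_lt i.isLt
  omega

lemma vecToPoly_smul (c : ZMod p) (a : Fin n → ZMod p) :
    vecToPoly (c • a) = Polynomial.C c * vecToPoly a := by
  simp [vecToPoly, Finset.mul_sum, mul_assoc]

lemma vecToPoly_zero : vecToPoly (0 : Fin n → ZMod p) = 0 := by
  simp [vecToPoly]

end Aux

section Eta

variable {p : ℕ} [Fact p.Prime]

lemma eta_not_mem {η : GaloisField p 2} (hη : Algebra.adjoin (ZMod p) {η} = ⊤) :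
    η ∉ Set.range (algebraMap (ZMod p) (GaloisField p 2)) := by
  rintro ⟨e, he⟩
  have hle : Algebra.adjoin (ZMod p) {η} ≤ ⊥ := by
    rw [Algebra.adjoin_le_iff]
    rintro x hx
    rw [Set.mem_singleton_iff] at hx
    subst hx
    rw [SetLike.mem_coe, Algebra.mem_bot]
    exact ⟨e, he⟩
  rw [hη] at hle
  have hsurj : Function.Surjective (algebraMap (ZMod p) (GaloisField p 2)) := by
    intro x
    have hx : x ∈ (⊥ : Subalgebra (ZMod p) (GaloisField p 2)) := hle trivial
    rwa [Algebra.mem_bot] at hx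
  have hcard : Nat.card (GaloisField p 2) = p ^ 2 := GaloisField.card p 2 (by norm_num)
  have hle2 := Nat.card_le_card_of_surjective _ hsurj
  rw [hcard, Nat.card_zmod] at hle2
  have hp2 := (Fact.out : p.Prime).two_le
  nlinarith

lemma eta_indep {η : GaloisField p 2}
    (hr : η ∉ Set.range (algebraMap (ZMod p) (GaloisField p 2)))
    (a b : ZMod p)
    (hab : algebraMap (ZMod p) (GaloisField p 2) a
        + algebraMap (ZMod p) (GaloisField p 2) b * η = 0) :
    a = 0 ∧ b = 0 := by
  set φ := algebraMap (ZMod p) (GaloisField p 2) with hφ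
  have hinj : Function.Injective φ := φ.injective
  by_cases hb : b = 0
  · subst hb
    simp only [map_zero, zero_mul, add_zero] at hab
    exact ⟨hinj (by simpa using hab), rfl⟩
  · exfalso
    apply hr
    refine ⟨-a * b⁻¹, ?_⟩
    have hbne : φ b ≠ 0 := fun hz => hb (hinj (by simpa using hz))
    rw [map_mul, map_neg, map_inv₀]
    field_simp
    linear_combination -hab

end Eta

lemma natDegree_pair_lt {p n : ℕ} [Fact p.Prime] [NeZero n] (η : GaloisField p 2)
    (w : (Fin n → ZMod p) × (Fin n → ZMod p)) :
    ((vecToPoly w.1).map (algebraMap (ZMod p) (GaloisField p 2)) +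
      Polynomial.C η * (vecToPoly w.2).map (algebraMap (ZMod p) (GaloisField p 2))).natDegree < n := by
  apply lt_of_le_of_lt (Polynomial.natDegree_add_le _ _)
  apply max_lt
  · exact lt_of_le_of_lt (Polynomial.natDegree_map_le) (vecToPoly_natDegree_lt w.1)
  · exact lt_of_le_of_lt ((Polynomial.natDegree_C_mul_le _ _).trans
      (Polynomial.natDegree_map_le)) (vecToPoly_natDegree_lt w.2)

lemma pairToQuot_injective (p n : ℕ) [Fact p.Prime] [NeZero n] (η : GaloisField p 2)
    (hr : η ∉ Set.range (algebraMap (ZMod p) (GaloisField p 2))) :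
    Function.Injective (pairToQuot p n η) := by
  set φ := algebraMap (ZMod p) (GaloisField p 2) with hφ
  intro w w' hww
  set P := ((vecToPoly w.1).map φ + Polynomial.C η * (vecToPoly w.2).map φ)
      - ((vecToPoly w'.1).map φ + Polynomial.C η * (vecToPoly w'.2).map φ) with hP
  have hdvd : (X : (GaloisField p 2)[X]) ^ n - 1 ∣ P := by
    rw [pairToQuot, pairToQuot, Ideal.Quotient.eq] at hww
    exact (Ideal.mem_span_singleton).mp hww
  have hPdeg : P.natDegree < n := by
    apply lt_of_le_of_lt (Polynomial.natDegree_sub_le _ _)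
    exact max_lt (natDegree_pair_lt η w) (natDegree_pair_lt η w')
  have hP0 : P = 0 := by
    by_contra hne
    have hle := Polynomial.natDegree_le_of_dvd hdvd hne
    rw [show ((X : (GaloisField p 2)[X]) ^ n - 1) = X ^ n - Polynomial.C 1 by rw [Polynomial.C_1],
      Polynomial.natDegree_X_pow_sub_C] at hle
    omega
  have hco : ∀ j : Fin n, φ (w.1 j - w'.1 j) + φ (w.2 j - w'.2 j) * η = 0 := by
    intro j
    have h1 := congrArg (fun q => Polynomial.coeff q (j : ℕ)) hP0
    simp only [hP, Polynomial.coeff_sub, Polynomial.coeff_add, Polynomial.coeff_C_mul,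
      Polynomial.coeff_map, vecToPoly_coeff, Polynomial.coeff_zero] at h1
    rw [map_sub, map_sub]
    linear_combination h1
  have h12 : ∀ j : Fin n, w.1 j = w'.1 j ∧ w.2 j = w'.2 j := by
    intro j
    obtain ⟨h1, h2⟩ := eta_indep hr _ _ (hco j)
    exact ⟨sub_eq_zero.mp h1, sub_eq_zero.mp h2⟩
  exact Prod.ext (funext fun j => (h12 j).1) (funext fun j => (h12 j).2)

lemma final_main (p t n : ℕ) [Fact p.Prime] [NeZero n] (K : Type) [Field K] [IsAlgClosed K]
    [CharP K p] (ht : 0 < t) (hdvd : n ∣ p ^ t + 1)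
    (h : Fin n → ZMod p) (hkey : ∀ k : Fin n, ∑ j : Fin n, h (j + k) * h j = 0) :
    h = 0 := by
  classical
  have hp : p.Prime := Fact.out
  have hn : 0 < n := Nat.pos_of_ne_zero (NeZero.ne n)
  have hpn : ¬ (p ∣ n) := by
    intro hd
    have h1 : p ∣ p ^ t + 1 := hd.trans hdvd
    have h2 : p ∣ p ^ t := dvd_pow_self p ht.ne'
    have h3 : p ∣ 1 := (Nat.dvd_add_right h2).mp h1
    exact hp.one_lt.ne' (Nat.dvd_one.mp h3)
  have hnK : (n : K) ≠ 0 := by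
    rw [Ne, CharP.cast_eq_zero_iff K p]
    exact hpn
  set φ := ZMod.castHom (dvd_refl p) K with hφ
  set g := (vecToPoly h).map φ with hg
  have hgx : ∀ z : K, g.eval z = ∑ i : Fin n, φ (h i) * z ^ (i : ℕ) := by
    intro z
    simp [hg, vecToPoly, Polynomial.eval_map, Polynomial.eval₂_finset_sum]
  -- every n-th root of unity is a root of g
  have heval0 : ∀ x : K, x ^ n = 1 → g.eval x = 0 := by
    intro x hx
    have hx0 : x ≠ 0 := by
      intro h0
      rw [h0, zero_pow hn.ne'] at hx
      exact zero_ne_one hx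
    have hmod : ∀ m : ℕ, x ^ m = x ^ (m % n) := by
      intro m
      conv_lhs => rw [← Nat.div_add_mod m n]
      rw [pow_add, pow_mul, hx, one_pow, one_mul]
    set f : Fin n → K := fun k => x ^ (k : ℕ) with hf
    have hfadd : ∀ a b : Fin n, f (a + b) = f a * f b := by
      intro a b
      rw [hf]
      simp only
      rw [Fin.val_add, ← hmod, pow_add]
    set y := x ^ p ^ t with hy
    have hyx : y * x = 1 := by
      obtain ⟨m, hm⟩ := hdvd
      rw [hy, ← pow_succ, hm, pow_mul, hx, one_pow]
    -- x^i * y^j = f (i - j)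
    have hxy : ∀ i j : Fin n, x ^ (i : ℕ) * y ^ (j : ℕ) = f (i - j) := by
      intro i j
      apply mul_right_cancel₀ (pow_ne_zero (j : ℕ) hx0)
      have h1 : y ^ (j : ℕ) * x ^ (j : ℕ) = 1 := by
        rw [← mul_pow, hyx, one_pow]
      have h2 : f (i - j) * x ^ (j : ℕ) = x ^ (i : ℕ) := by
        have := hfadd (i - j) j
        rw [sub_add_cancel] at this
        exact this.symm
      rw [mul_assoc, h1, mul_one, h2]
    -- Frobenius
    have hfrob : (g.eval x) ^ p ^ t = g.eval y := by
      rw [hgx, hgx]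
      have e1 := map_sum (iterateFrobenius K p t) (fun i : Fin n => φ (h i) * x ^ (i : ℕ))
        Finset.univ
      simp only [iterateFrobenius_def, mul_pow, ← pow_mul] at e1
      rw [e1]
      apply Finset.sum_congr rfl
      intro i _
      congr 1
      · rw [← map_pow, ZMod.pow_card_pow]
      · rw [hy, ← pow_mul, mul_comm]
    -- the product vanishes
    have hprod : g.eval x * g.eval y = 0 := by
      rw [hgx, hgx, Finset.sum_mul_sum]
      have step : ∀ i j : Fin n,
          (φ (h i) * x ^ (i : ℕ)) * (φ (h j) * y ^ (j : ℕ))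
            = φ (h i) * φ (h j) * f (i - j) := by
        intro i j
        rw [← hxy i j]; ring
      calc (∑ i : Fin n, ∑ j : Fin n, (φ (h i) * x ^ (i : ℕ)) * (φ (h j) * y ^ (j : ℕ)))
          = ∑ i : Fin n, ∑ j : Fin n, φ (h i) * φ (h j) * f (i - j) := by
            exact Finset.sum_congr rfl fun i _ => Finset.sum_congr rfl fun j _ => step i j
        _ = ∑ ij : Fin n × Fin n, φ (h ij.1) * φ (h ij.2) * f (ij.1 - ij.2) :=
            (Fintype.sum_prod_type
              (fun ij : Fin n × Fin n => φ (h ij.1) * φ (h ij.2) * f (ij.1 - ij.2))).symm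
        _ = ∑ kj : Fin n × Fin n, φ (h (kj.2 + kj.1)) * φ (h kj.2) * f kj.1 := by
            apply Fintype.sum_equiv
              (⟨fun ij => (ij.1 - ij.2, ij.2), fun kj => (kj.2 + kj.1, kj.2),
                fun ij => by ext <;> simp [add_comm],
                fun kj => by ext <;> simp [add_sub_cancel_left]⟩ :
                  Fin n × Fin n ≃ Fin n × Fin n)
            intro ij
            simp only [Equiv.coe_fn_mk]
            rw [add_comm ij.2 (ij.1 - ij.2), sub_add_cancel]
        _ = ∑ k : Fin n, ∑ j : Fin n, φ (h (j + k)) * φ (h j) * f k :=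
            Fintype.sum_prod_type
              (fun kj : Fin n × Fin n => φ (h (kj.2 + kj.1)) * φ (h kj.2) * f kj.1)
        _ = 0 := by
            apply Finset.sum_eq_zero
            intro k _
            rw [← Finset.sum_mul]
            have : (∑ j : Fin n, φ (h (j + k)) * φ (h j)) = 0 := by
              rw [← map_zero φ, ← hkey k, map_sum]
              exact Finset.sum_congr rfl fun j _ => (map_mul φ _ _).symm
            rw [this, zero_mul]
    rw [← hfrob] at hprod
    have : (g.eval x) ^ (p ^ t + 1) = 0 := by
      rw [pow_succ, ← hprod]; ring
    exact pow_eq_zero_iff (by positivity) |>.mp this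
  -- g vanishes on the n distinct n-th roots of unity, and deg g < n
  have hXn : ((X : K[X]) ^ n - Polynomial.C 1) ≠ 0 := Polynomial.X_pow_sub_C_ne_zero hn 1
  have hsep : ((X : K[X]) ^ n - Polynomial.C 1).Separable :=
    Polynomial.separable_X_pow_sub_C 1 hnK one_ne_zero
  have hsplit : Polynomial.Splits ((X : K[X]) ^ n - Polynomial.C 1) :=
    IsAlgClosed.splits _
  have hcardroots : ((X : K[X]) ^ n - Polynomial.C 1).roots.toFinset.card = n := by
    rw [Multiset.toFinset_card_of_nodup (Polynomial.nodup_roots hsep),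
      (Polynomial.splits_iff_card_roots).mp hsplit, Polynomial.natDegree_X_pow_sub_C]
  have hg0 : g = 0 := by
    apply Polynomial.eq_zero_of_natDegree_lt_card_of_eval_eq_zero' g
      ((X : K[X]) ^ n - Polynomial.C 1).roots.toFinset
    · intro x hxmem
      rw [Multiset.mem_toFinset, Polynomial.mem_roots hXn] at hxmem
      apply heval0
      have hx : x ^ n - 1 = 0 := by
        simpa using hxmem
      exact sub_eq_zero.mp hx
    · rw [hcardroots]
      exact lt_of_le_of_lt Polynomial.natDegree_map_le (vecToPoly_natDegree_lt h)
  funext j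
  have hc := congrArg (fun q => Polynomial.coeff q (j : ℕ)) hg0
  simp only [hg, Polynomial.coeff_map, vecToPoly_coeff, Polynomial.coeff_zero] at hc
  exact (_root_.map_eq_zero φ).mp hc

lemma final_step (p t n : ℕ) [Fact p.Prime] [NeZero n] (ht : 0 < t) (hdvd : n ∣ p ^ t + 1)
    (h : Fin n → ZMod p) (hkey : ∀ k : Fin n, ∑ j : Fin n, h (j + k) * h j = 0) :
    h = 0 :=
  final_main p t n (AlgebraicClosure (ZMod p)) ht hdvd h hkey

section Shift

variable {p n : ℕ} [NeZero n]

open Fin.NatCast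

lemma rightShift_iterate (k : ℕ) (u : Fin n → ZMod p) (i : Fin n) :
    rightShift^[k] u i = u (i - (k : Fin n)) := by
  induction k generalizing u i with
  | zero => simp
  | succ m ih =>
    rw [Function.iterate_succ_apply, ih (rightShift u) i, rightShift]
    congr 1
    push_cast
    abel

end Shift

theorem stmt_9 (p t n : ℕ) (hp : p.Prime) [Fact p.Prime] [NeZero n] (ht : 0 < t)
    (hdvd : n ∣ p ^ t + 1)
    (η : GaloisField p 2) (hη : Algebra.adjoin (ZMod p) {η} = ⊤)
    (S : Submodule (ZMod p) ((Fin n → ZMod p) × (Fin n → ZMod p)))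
    (hcyc : ∀ w ∈ S, (rightShift w.1, rightShift w.2) ∈ S)
    (hiso : ∀ u ∈ S, ∀ v ∈ S, sympForm u v = 0)
    (hideal : ∃ I : Ideal (Polynomial (GaloisField p 2) ⧸
        Ideal.span {(X : Polynomial (GaloisField p 2)) ^ n - 1}),
      pairToQuot p n η '' (S : Set ((Fin n → ZMod p) × (Fin n → ZMod p))) = (I : Set _)) :
    ∀ h : Fin n → ZMod p, ((0 : Fin n → ZMod p), h) ∈ S → h = 0 := by
  intro h hS
  set φ := algebraMap (ZMod p) (GaloisField p 2) with hφ
  have hr : η ∉ Set.range φ := eta_not_mem hη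
  -- a basis 1, η of the quadratic extension
  have hfr : Module.finrank (ZMod p) (GaloisField p 2) = 2 :=
    GaloisField.finrank p (by norm_num)
  have hli : LinearIndependent (ZMod p) ![(1 : GaloisField p 2), η] := by
    rw [LinearIndependent.pair_iff]
    intro s u hsu
    apply eta_indep hr s u
    rw [Algebra.smul_def, Algebra.smul_def, mul_one] at hsu
    exact hsu
  let B := basisOfLinearIndependentOfCardEqFinrank hli (by simp [hfr])
  set c := B.repr (η ^ 2) 0 with hc
  set d := B.repr (η ^ 2) 1 with hd
  have hcd : η ^ 2 = φ c + φ d * η := by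
    have hsum := B.sum_repr (η ^ 2)
    rw [Fin.sum_univ_two] at hsum
    have hB0 : B 0 = 1 := by
      rw [show B = basisOfLinearIndependentOfCardEqFinrank hli (by simp [hfr]) from rfl]
      rw [coe_basisOfLinearIndependentOfCardEqFinrank]
      rfl
    have hB1 : B 1 = η := by
      rw [show B = basisOfLinearIndependentOfCardEqFinrank hli (by simp [hfr]) from rfl]
      rw [coe_basisOfLinearIndependentOfCardEqFinrank]
      rfl
    rw [hB0, hB1, Algebra.smul_def, Algebra.smul_def, mul_one] at hsum
    exact hsum.symm
  have hc0 : c ≠ 0 := by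
    intro h0
    rw [h0, map_zero, zero_add] at hcd
    have hfac : η * (η - φ d) = 0 := by ring_nf; linear_combination hcd
    rcases mul_eq_zero.mp hfac with h1 | h1
    · exact hr ⟨0, by simp [h1]⟩
    · exact hr ⟨d, (sub_eq_zero.mp h1).symm⟩
  -- move to the ideal and back: (c • h, d • h) ∈ S
  obtain ⟨I, hI⟩ := hideal
  have hmem : pairToQuot p n η (0, h) ∈ I := by
    have : pairToQuot p n η (0, h) ∈ pairToQuot p n η '' (S : Set _) :=
      ⟨(0, h), hS, rfl⟩
    rwa [hI] at this
  have hmul : Ideal.Quotient.mk _ (Polynomial.C η) * pairToQuot p n η (0, h) ∈ I :=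
    I.mul_mem_left _ hmem
  have hval : Ideal.Quotient.mk _ (Polynomial.C η) * pairToQuot p n η (0, h)
      = pairToQuot p n η (c • h, d • h) := by
    rw [pairToQuot, pairToQuot, ← map_mul]
    congr 1
    have h0 : vecToPoly (0 : Fin n → ZMod p) = 0 := vecToPoly_zero
    simp only [h0, Polynomial.map_zero, zero_add]
    rw [vecToPoly_smul, vecToPoly_smul, Polynomial.map_mul, Polynomial.map_mul,
      Polynomial.map_C, Polynomial.map_C]
    calc Polynomial.C η * (Polynomial.C η * (vecToPoly h).map φ)
        = Polynomial.C (η ^ 2) * (vecToPoly h).map φ := by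
          rw [← mul_assoc, ← Polynomial.C_mul, sq]
      _ = Polynomial.C (φ c) * (vecToPoly h).map φ
          + Polynomial.C η * (Polynomial.C (φ d) * (vecToPoly h).map φ) := by
          rw [hcd, Polynomial.C_add, Polynomial.C_mul]; ring
  have hcdS : ((c • h, d • h) : (Fin n → ZMod p) × (Fin n → ZMod p)) ∈ S := by
    rw [hval] at hmul
    have hmul' : pairToQuot p n η (c • h, d • h)
        ∈ pairToQuot p n η '' (S : Set _) := by
      rw [hI]; exact hmul
    obtain ⟨w, hwS, hw⟩ := hmul'
    have := pairToQuot_injective p n η hr hw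
    rwa [this] at hwS
  -- total isotropy with all shifts of (c•h, d•h)
  have hkey : ∀ k : Fin n, ∑ j : Fin n, h (j + k) * h j = 0 := by
    intro k
    have hshift : ((rightShift^[(k : ℕ)] (c • h), rightShift^[(k : ℕ)] (d • h))
        : (Fin n → ZMod p) × (Fin n → ZMod p)) ∈ S := by
      generalize (k : ℕ) = m
      induction m with
      | zero => simpa using hcdS
      | succ l ih =>
        have := hcyc _ ih
        simpa [Function.iterate_succ_apply'] using this
    have hsymp := hiso _ hS _ hshift
    rw [sympForm] at hsymp
    simp only [Pi.zero_apply, zero_mul, Finset.sum_const_zero, zero_sub, neg_eq_zero] at hsymp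
    have hsum : ∑ i : Fin n, h i * (c * h (i - k)) = 0 := by
      rw [← hsymp]
      apply Finset.sum_congr rfl
      intro i _
      congr 1
      rw [rightShift_iterate, Fin.cast_val_eq_self]
      simp [Pi.smul_apply, smul_eq_mul]
    have hsum2 : c * ∑ i : Fin n, h i * h (i - k) = 0 := by
      rw [Finset.mul_sum, ← hsum]
      exact Finset.sum_congr rfl fun i _ => by ring
    have hsum3 : ∑ i : Fin n, h i * h (i - k) = 0 :=
      (mul_eq_zero.mp hsum2).resolve_left hc0
    rw [← hsum3]
    apply Fintype.sum_equiv (Equiv.addRight k)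
    intro j
    simp [Equiv.addRight, add_sub_cancel_right]
  exact final_step p t n ht hdvd h hkey
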